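/- Let X ⊆ ℕ. If X, viewed as a subset of ℤ, is piecewise syndetic in the additive group (ℤ, +), then X is piecewise syndetic in the additive semigroup (ℕ, +). -/
import Mathlib


/-- A subset `Y` of an additive semigroup is thick if every finite set can be
translated into `Y`. -/
def AddThick {S : Type*} [Add S] (Y : Set S) : Prop :=
  ∀ H : Finset S, ∃ s : S, ∀ h ∈ H, h + s ∈ Y

/-- A subset `X` of an additive semigroup is piecewise syndetic if finitely many
translates of `X` union to a thick set. -/
def AddPiecewiseSyndetic {S : Type*} [Add S] (X : Set S) : Prop :=
  ∃ H : Finset S, AddThick (⋃ t ∈ H, {s : S | t + s ∈ X})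

theorem stmt_2 (X : Set ℕ)
    (h : AddPiecewiseSyndetic (((↑) : ℕ → ℤ) '' X)) :
    AddPiecewiseSyndetic X := by
  obtain ⟨H, hH⟩ := h
  set M : ℤ := ((H.sup fun t => t.natAbs : ℕ) : ℤ) with hMdef
  have hM0 : 0 ≤ M := Int.ofNat_nonneg _
  have hMt : ∀ t ∈ H, |t| ≤ M := by
    intro t ht
    rw [Int.abs_eq_natAbs, hMdef]
    exact_mod_cast Finset.le_sup ht
  refine ⟨H.image (fun t => (t + M).toNat), ?_⟩
  intro F
  obtain ⟨s, hs⟩ := hH (insert 0 (F.image fun h : ℕ => (h : ℤ) + 3 * M))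
  have h0 := hs 0 (Finset.mem_insert_self _ _)
  simp only [Set.mem_iUnion] at h0
  obtain ⟨t0, ht0, n0, _, hn0⟩ := h0
  have hsge : -2 * M ≤ s := by
    have h1 : |t0| ≤ M := hMt t0 ht0
    have h2 : (0:ℤ) ≤ t0 + (0 + s) := hn0 ▸ Int.ofNat_nonneg n0
    have h3 := le_abs_self t0
    linarith
  refine ⟨(s + 2 * M).toNat, ?_⟩
  intro h hF
  have hmem := hs ((h : ℤ) + 3 * M)
    (Finset.mem_insert_of_mem (Finset.mem_image_of_mem _ hF))
  simp only [Set.mem_iUnion] at hmem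
  obtain ⟨t, ht, n, hnX, hn⟩ := hmem
  simp only [Set.mem_iUnion, Set.mem_setOf_eq]
  refine ⟨(t + M).toNat, Finset.mem_image_of_mem _ ht, ?_⟩
  have htM : 0 ≤ t + M := by
    have := neg_abs_le t; have := hMt t ht; linarith
  have hsM : 0 ≤ s + 2 * M := by linarith
  have hcast : ((((t + M).toNat) + (h + (s + 2 * M).toNat) : ℕ) : ℤ)
      = t + ((h : ℤ) + 3 * M + s) := by
    push_cast [Int.toNat_of_nonneg htM, Int.toNat_of_nonneg hsM]
    ring
  have : (((t + M).toNat) + (h + (s + 2 * M).toNat) : ℕ) = n := by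
    have : ((((t + M).toNat) + (h + (s + 2 * M).toNat) : ℕ) : ℤ) = (n : ℤ) := by
      rw [hcast, hn]
    exact_mod_cast this
  rw [this]
  exact hnX
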